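/- Let A be a C*-algebra, let a be a positive element of A, and let p be a projection in A with a ≥ δ·p for some δ > 0. Then for every δ' with 0 ≤ δ' < δ, the projection p is Cuntz subequivalent to (a - δ')₊. -/

import Mathlib

open Filter Topology

def CuntzBelow {A : Type*} [CStarAlgebra A] (a b : A) : Prop :=
  ∃ x : ℕ → A, Tendsto (fun n => ‖a - x n * b * star (x n)‖) atTop (𝓝 0)

noncomputable def cutoff {A : Type*} [CStarAlgebra A] (a : A) (δ : ℝ) : A :=
  cfc (fun t : ℝ => max (t - δ) 0) a

lemma aux_smul_nonneg {A : Type*} [CStarAlgebra A] [PartialOrder A] [StarOrderedRing A]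
    {x : A} (hx : 0 ≤ x) {t : ℝ} (ht : 0 ≤ t) : 0 ≤ t • x := by
  have hsa : IsSelfAdjoint x := .of_nonneg hx
  rw [← cfc_smul_id (R := ℝ) t x hsa]
  exact cfc_nonneg fun s hs => smul_nonneg ht (spectrum_nonneg_of_nonneg hx hs)

lemma aux_commute_cfc {A : Type*} [CStarAlgebra A] {d p : A}
    (hp₁ : star p = p) (hp₂ : p * p = p) (hpd : p * d = d * p)
    (hdsa : IsSelfAdjoint d) (f : ℝ → ℝ) (hf : ContinuousOn f (spectrum ℝ d)) :
    p * cfc f d = cfc f d * p := by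
  set u : A := 1 - p - p with hu_def
  have husa : star u = u := by simp [hu_def, hp₁]
  have hu2 : u * u = 1 := by
    simp only [hu_def, mul_sub, sub_mul, mul_one, one_mul, hp₂]
    abel
  let φ : A →⋆ₐ[ℂ] A :=
    { toFun := fun x => u * x * u
      map_one' := by show u * 1 * u = 1; rw [mul_one, hu2]
      map_mul' := fun x y => by
        calc u * (x * y) * u = u * x * 1 * y * u := by noncomm_ring
          _ = u * x * (u * u) * y * u := by rw [hu2]
          _ = (u * x * u) * (u * y * u) := by noncomm_ring
      map_zero' := by simp
      map_add' := fun x y => by noncomm_ring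
      commutes' := fun r => by
        show u * (algebraMap ℂ A r) * u = algebraMap ℂ A r
        rw [Algebra.algebraMap_eq_smul_one, mul_smul_comm, mul_one, smul_mul_assoc, hu2]
      map_star' := fun x => by simp [star_mul, husa, mul_assoc] }
  have hud : u * d = d * u := by
    simp only [hu_def, sub_mul, mul_sub, one_mul, mul_one, hpd]
  have hφd : φ d = d := by
    show u * d * u = d
    rw [hud, mul_assoc, hu2, mul_one]
  have hφcont : Continuous φ := by
    show Continuous fun x => u * x * u
    fun_prop
  have key : u * cfc f d * u = cfc f d := by
    have h := StarAlgHomClass.map_cfc (R := ℝ) φ f d hf hφcont hdsa (show IsSelfAdjoint (φ d) by rw [hφd]; exact hdsa)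
    rw [hφd] at h
    exact h
  set e := cfc f d with he_def
  have hue : u * e = e * u := by
    have h1 : u * e * u * u = e * u := by rw [key]
    rwa [mul_assoc (u * e), hu2, mul_one] at h1
  have h2 : e - p * e - p * e = e - e * p - e * p := by
    have := hue
    simpa only [hu_def, sub_mul, mul_sub, one_mul, mul_one] using this
  have h3 : (2 : ℝ) • (p * e) = (2 : ℝ) • (e * p) := by
    rw [sub_sub, sub_sub, sub_right_inj] at h2
    rw [two_smul, two_smul]
    exact h2
  exact smul_right_injective A (by norm_num : (2 : ℝ) ≠ 0) h3

theorem stmt_3 {A : Type*} [CStarAlgebra A] [PartialOrder A] [StarOrderedRing A] (a p : A) (ha : 0 ≤ a)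
    (hp₁ : star p = p) (hp₂ : p * p = p) (δ : ℝ) (hδ : 0 < δ)
    (h : δ • p ≤ a) (δ' : ℝ) (hδ'₀ : 0 ≤ δ') (hδ' : δ' < δ) :
    CuntzBelow p (cutoff a δ') := by
  have hsa : IsSelfAdjoint a := .of_nonneg ha
  set b := cutoff a δ' with hb_def
  have hbsa : IsSelfAdjoint b := cfc_predicate _ a
  have hp0 : 0 ≤ p := by
    have := star_mul_self_nonneg p
    rwa [hp₁, hp₂] at this
  have hq0 : 0 ≤ 1 - p := by
    have h1 : star (1 - p) = 1 - p := by rw [star_sub, star_one, hp₁]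
    have h2 : (1 - p) * (1 - p) = 1 - p := by
      simp only [mul_sub, sub_mul, one_mul, mul_one, hp₂]
      abel
    have := star_mul_self_nonneg (1 - p)
    rwa [h1, h2] at this
  -- Step A : a - δ' • 1 ≤ b
  have hA : a - δ' • (1 : A) ≤ b := by
    have h1 : a - δ' • (1 : A) = cfc (fun t : ℝ => t - δ') a := by
      rw [cfc_sub (fun t : ℝ => t) (fun _ => δ') a, cfc_id' ℝ a, cfc_const δ' a,
        Algebra.algebraMap_eq_smul_one]
    rw [h1, hb_def, cutoff]
    exact cfc_mono fun x _ => le_max_left _ _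
  -- Step B : (δ - δ') • p ≤ c := p * b * p
  set c := p * b * p with hc_def
  have hcsa : star c = c := by
    rw [hc_def]
    simp only [star_mul, hp₁, hbsa.star_eq]
    rw [mul_assoc]
  have hpc : p * c = c := by
    rw [hc_def, ← mul_assoc, ← mul_assoc, hp₂]
  have hcp : c * p = c := by
    rw [hc_def, mul_assoc, mul_assoc, hp₂, ← mul_assoc]
  have hB : (δ - δ') • p ≤ c := by
    have h1 : p * (δ • p) * p ≤ p * a * p := by
      have := star_left_conjugate_le_conjugate h p
      rwa [hp₁] at this
    have h2 : p * (a - δ' • 1) * p ≤ c := by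
      have := star_left_conjugate_le_conjugate hA p
      rwa [hp₁] at this
    have h3 : p * (δ • p) * p = δ • p := by
      rw [mul_smul_comm, smul_mul_assoc, hp₂, hp₂]
    have h4 : p * (a - δ' • 1) * p = p * a * p - δ' • p := by
      rw [mul_sub, sub_mul, mul_smul_comm, mul_one, smul_mul_assoc, hp₂]
    calc (δ - δ') • p = δ • p - δ' • p := by rw [sub_smul]
      _ ≤ p * a * p - δ' • p := sub_le_sub_right (h3 ▸ h1) _
      _ = p * (a - δ' • 1) * p := h4.symm
      _ ≤ c := h2
  -- Step C : d := c + (1 - p) satisfies m • 1 ≤ d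
  set m : ℝ := min (δ - δ') 1 with hm_def
  have hm : 0 < m := lt_min (by linarith) one_pos
  set d := c + (1 - p) with hd_def
  have hd1 : m • (1 : A) ≤ d := by
    have e1 : m • p ≤ (δ - δ') • p := by
      have h5 : 0 ≤ ((δ - δ') - m) • p := aux_smul_nonneg hp0 (by simp [hm_def])
      rw [sub_smul, sub_nonneg] at h5
      exact h5
    have e2 : m • (1 - p) ≤ 1 - p := by
      have h5 : 0 ≤ (1 - m) • (1 - p) := aux_smul_nonneg hq0 (by simp [hm_def])
      rw [sub_smul, one_smul, sub_nonneg] at h5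
      exact h5
    calc m • (1 : A) = m • p + m • (1 - p) := by rw [← smul_add]; congr 1; abel
      _ ≤ (δ - δ') • p + (1 - p) := add_le_add e1 e2
      _ ≤ c + (1 - p) := add_le_add hB le_rfl
  have hdsa : IsSelfAdjoint d := by
    rw [hd_def]
    rw [IsSelfAdjoint, star_add, hcsa, star_sub, star_one, hp₁]
  -- spectrum of d lies in [m, ∞)
  have hspec : spectrum ℝ d ⊆ Set.Ici m := by
    intro x hx
    have h0 : 0 ≤ d - algebraMap ℝ A m := by
      rw [Algebra.algebraMap_eq_smul_one, sub_nonneg]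
      exact hd1
    have hx' : x - m ∈ spectrum ℝ (d - algebraMap ℝ A m) := by
      rw [← spectrum.sub_singleton_eq]
      exact Set.sub_mem_sub hx rfl
    have := spectrum_nonneg_of_nonneg h0 hx'
    simpa using sub_nonneg.mp (by linarith)
  -- the inverse square root of d
  set f : ℝ → ℝ := fun t => (Real.sqrt t)⁻¹ with hf_def
  have hf : ContinuousOn f (spectrum ℝ d) := by
    apply ContinuousOn.inv₀ Real.continuous_sqrt.continuousOn
    intro x hx
    exact (Real.sqrt_ne_zero').mpr (hm.trans_le (hspec hx))
  set e := cfc f d with he_def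
  have hesa : IsSelfAdjoint e := cfc_predicate f d
  have hede : e * d * e = 1 := by
    have hfc : ContinuousOn (fun t : ℝ => f t * t) (spectrum ℝ d) := hf.mul continuousOn_id
    have h1 : e * d = cfc (fun t : ℝ => f t * t) d := by
      conv_lhs => rw [show d = cfc (fun t : ℝ => t) d from (cfc_id' ℝ d hdsa).symm]
      exact (cfc_mul f (fun t : ℝ => t) d hf continuousOn_id).symm
    have h2 : e * d * e = cfc (fun t : ℝ => f t * t * f t) d := by
      rw [h1]
      exact (cfc_mul (fun t : ℝ => f t * t) f d hfc hf).symm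
    rw [h2]
    have h3 : cfc (fun t : ℝ => f t * t * f t) d = cfc (fun _ : ℝ => (1 : ℝ)) d := by
      apply cfc_congr
      intro x hx
      have hx0 : 0 < x := hm.trans_le (hspec hx)
      have hs : Real.sqrt x ≠ 0 := (Real.sqrt_ne_zero').mpr hx0
      simp only [hf_def]
      rw [mul_comm ((Real.sqrt x)⁻¹) x, mul_assoc, ← mul_inv, Real.mul_self_sqrt hx0.le,
        mul_inv_cancel₀ hx0.ne']
    rw [h3]
    exact cfc_const_one ℝ d hdsa
  -- p commutes with d and hence with e
  have hpd : p * d = d * p := by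
    rw [hd_def]
    simp only [mul_add, add_mul, mul_sub, sub_mul, mul_one, one_mul, hp₂, hpc, hcp]
  have hpe : p * e = e * p := aux_commute_cfc hp₁ hp₂ hpd hdsa f hf
  -- final computation : (e * p) * b * star (e * p) = p
  have hdp : d * p = c := by
    rw [hd_def, add_mul, sub_mul, one_mul, hp₂, hcp]
    abel
  have hfinal : (e * p) * b * star (e * p) = p := by
    have hstar : star (e * p) = p * e := by rw [star_mul, hp₁, hesa.star_eq]
    rw [hstar]
    calc e * p * b * (p * e) = e * (p * b * p) * e := by noncomm_ring
      _ = e * (d * p) * e := by rw [hdp, ← hc_def]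
      _ = e * d * (p * e) := by noncomm_ring
      _ = e * d * (e * p) := by rw [hpe]
      _ = (e * d * e) * p := by noncomm_ring
      _ = p := by rw [hede, one_mul]
  refine ⟨fun _ => e * p, ?_⟩
  simp only [hfinal, sub_self, norm_zero]
  exact tendsto_const_nhds
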